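/- If a countable group G acts by order-preserving bijections on a totally-ordered set S in such a way that the kernel of the action is left-orderable, then G is left-orderable. -/

import Mathlib

/-- If a countable group `G` acts by order-preserving bijections on a totally
ordered set `S` with left-orderable kernel, then `G` is left-orderable. -/
theorem stmt12 {G : Type*} {S : Type*} [Group G] [Countable G] [LinearOrder S]
    (f : G →* Equiv.Perm S)
    (hmono : ∀ g : G, StrictMono (f g))
    (hker : ∃ r : f.ker → f.ker → Prop, IsStrictTotalOrder f.ker r ∧
      ∀ a b c : f.ker, r a b ↔ r (c * a) (c * b)) :
    ∃ r : G → G → Prop, IsStrictTotalOrder G r ∧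
      ∀ a b c : G, r a b ↔ r (c * a) (c * b) := by
  classical
  obtain ⟨rk, hrk, hrkinv⟩ := hker
  haveI := hrk
  -- positivity facts for the kernel order
  have kposmul : ∀ x y : f.ker, rk 1 x → rk 1 y → rk 1 (x * y) := by
    intro x y hx hy
    have h1 : rk (x * 1) (x * y) := (hrkinv 1 y x).mp hy
    rw [mul_one] at h1
    exact trans_of rk hx h1
  have kposinv : ∀ x : f.ker, rk x 1 → rk 1 x⁻¹ := by
    intro x hx
    have h1 : rk (x⁻¹ * x) (x⁻¹ * 1) := (hrkinv x 1 x⁻¹).mp hx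
    rwa [inv_mul_cancel, mul_one] at h1
  rcases isEmpty_or_nonempty S with hS | hS
  · -- empty case: everything is in the kernel
    have hmem : ∀ g : G, g ∈ f.ker := by
      intro g
      rw [MonoidHom.mem_ker]
      exact Equiv.ext fun s => isEmptyElim s
    refine ⟨fun a b => rk ⟨a, hmem a⟩ ⟨b, hmem b⟩, ?_, ?_⟩
    · exact
        { trichotomous := by
            intro a b hn1 hn2
            rcases trichotomous_of rk ⟨a, hmem a⟩ ⟨b, hmem b⟩ with h | h | h
            · exact absurd h hn1
            · exact congrArg Subtype.val h
            · exact absurd h hn2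
          irrefl := fun a => irrefl_of rk _
          trans := fun a b c h1 h2 => trans_of rk h1 h2 }
    · intro a b c
      exact hrkinv ⟨a, hmem a⟩ ⟨b, hmem b⟩ ⟨c, hmem c⟩
  · -- nonempty case
    obtain ⟨e, he⟩ : ∃ e : G → ℕ, Function.Injective e := Countable.exists_injective_nat G
    set d : ℕ → G := Function.invFun e with hd_def
    have hd : ∀ g, d (e g) = g := Function.leftInverse_invFun he
    set t : ℕ → S := fun n =>
      if h : ∃ s, f (d n) s ≠ s then h.choose else Classical.arbitrary S with ht_def
    have ht : ∀ g : G, g ∉ f.ker → f g (t (e g)) ≠ t (e g) := by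
      intro g hg
      have hex : ∃ s, f g s ≠ s := by
        by_contra hc
        push_neg at hc
        exact hg (MonoidHom.mem_ker.mpr (Equiv.ext fun s => hc s))
      have h1 : t (e g) = hex.choose := by
        rw [ht_def]
        simp only [hd]
        exact dif_pos hex
      rw [h1]
      exact hex.choose_spec
    set Φ : G → ℕ → S := fun g n => f g (t n) with hΦ_def
    set L : (ℕ → S) → (ℕ → S) → Prop := Pi.Lex (· < ·) (· < ·) with hL_def
    have Ltrans : ∀ u v w : ℕ → S, L u v → L v w → L u w := by
      rintro u v w ⟨N₁, lt_N₁, a_lt_b⟩ ⟨N₂, lt_N₂, b_lt_c⟩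
      rcases lt_trichotomy N₁ N₂ with H | rfl | H
      exacts [⟨N₁, fun j hj => (lt_N₁ _ hj).trans (lt_N₂ _ <| hj.trans H), lt_N₂ _ H ▸ a_lt_b⟩,
        ⟨N₁, fun j hj => (lt_N₁ _ hj).trans (lt_N₂ _ hj), a_lt_b.trans b_lt_c⟩,
        ⟨N₂, fun j hj => (lt_N₁ _ (hj.trans H)).trans (lt_N₂ _ hj), (lt_N₁ _ H).symm ▸ b_lt_c⟩]
    have Lirrefl : ∀ u : ℕ → S, ¬ L u u := by
      rintro u ⟨i, _, hi⟩
      exact lt_irrefl _ hi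
    have Ltrich : ∀ u v : ℕ → S, L u v ∨ u = v ∨ L v u := fun u v => by
      by_cases hn1 : L u v
      · exact Or.inl hn1
      by_cases hn2 : L v u
      · exact Or.inr (Or.inr hn2)
      exact Or.inr (Or.inl ((Pi.isTrichotomous_lex _ _ (IsWellFounded.wf)).trichotomous u v hn1 hn2))
    have hΦmul : ∀ (c a : G) (n : ℕ), Φ (c * a) n = f c (Φ a n) := by
      intro c a n
      show f (c * a) (t n) = f c (f a (t n))
      rw [map_mul]
      rfl
    have hcomp1 : ∀ (c a b : G), L (Φ a) (Φ b) → L (Φ (c * a)) (Φ (c * b)) := by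
      rintro c a b ⟨i, h1, h2⟩
      have e1 : ∀ j, j < i → Φ (c * a) j = Φ (c * b) j := by
        intro j hj
        rw [hΦmul c a j, hΦmul c b j, h1 j hj]
      have e2 : Φ (c * a) i < Φ (c * b) i := by
        rw [hΦmul c a i, hΦmul c b i]
        exact hmono c h2
      exact ⟨i, e1, e2⟩
    have hcomp : ∀ (c a b : G), L (Φ a) (Φ b) ↔ L (Φ (c * a)) (Φ (c * b)) := by
      intro c a b
      constructor
      · exact hcomp1 c a b
      · intro h
        have h2 := hcomp1 c⁻¹ (c * a) (c * b) h
        rwa [inv_mul_cancel_left, inv_mul_cancel_left] at h2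
    have hΦeq : ∀ a b : G, a⁻¹ * b ∈ f.ker → Φ a = Φ b := by
      intro a b h
      have h1 : f (a⁻¹ * b) = 1 := MonoidHom.mem_ker.mp h
      rw [map_mul, map_inv] at h1
      have h2 : f a = f b := by
        rw [← inv_mul_eq_one]
        exact h1
      funext n
      show f a (t n) = f b (t n)
      rw [h2]
    have hΦne : ∀ a b : G, a⁻¹ * b ∉ f.ker → Φ a ≠ Φ b := by
      intro a b h heq
      have h1 := ht _ h
      have h2 : f b (t (e (a⁻¹ * b))) = f a (f (a⁻¹ * b) (t (e (a⁻¹ * b)))) := by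
        rw [← Equiv.Perm.mul_apply, ← map_mul, mul_inv_cancel_left]
      have h3 : Φ a (e (a⁻¹ * b)) = Φ b (e (a⁻¹ * b)) := congrFun heq _
      have h4 : f a (t (e (a⁻¹ * b))) = f a (f (a⁻¹ * b) (t (e (a⁻¹ * b)))) := by
        rw [← h2]
        exact h3
      exact h1 ((f a).injective h4.symm)
    refine ⟨fun a b => L (Φ a) (Φ b) ∨ ∃ h : a⁻¹ * b ∈ f.ker, rk 1 ⟨a⁻¹ * b, h⟩, ?_, ?_⟩
    · refine
        { trichotomous := ?_
          irrefl := ?_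
          trans := ?_ }
      · intro a b hn1 hn2
        refine (show (L (Φ a) (Φ b) ∨ ∃ h : a⁻¹ * b ∈ f.ker, rk 1 ⟨a⁻¹ * b, h⟩) ∨ a = b ∨
            (L (Φ b) (Φ a) ∨ ∃ h : b⁻¹ * a ∈ f.ker, rk 1 ⟨b⁻¹ * a, h⟩) from ?_).elim
          (fun h => absurd h hn1) (fun h => h.elim id (fun h => absurd h hn2))
        rcases Ltrich (Φ a) (Φ b) with h | h | h
        · exact Or.inl (Or.inl h)
        · have hk : a⁻¹ * b ∈ f.ker := by
            by_contra hk
            exact hΦne a b hk h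
          rcases trichotomous_of rk 1 ⟨a⁻¹ * b, hk⟩ with h1 | h1 | h1
          · exact Or.inl (Or.inr ⟨hk, h1⟩)
          · have : a⁻¹ * b = 1 := (congrArg Subtype.val h1).symm
            exact Or.inr (Or.inl (inv_mul_eq_one.mp this))
          · have h2 : rk 1 (⟨a⁻¹ * b, hk⟩ : f.ker)⁻¹ := kposinv _ h1
            have hk' : b⁻¹ * a ∈ f.ker := by
              have hba : b⁻¹ * a = (a⁻¹ * b)⁻¹ := by group
              rw [hba]
              exact inv_mem hk
            have h3 : (⟨b⁻¹ * a, hk'⟩ : f.ker) = (⟨a⁻¹ * b, hk⟩ : f.ker)⁻¹ :=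
              Subtype.ext (by show b⁻¹ * a = (a⁻¹ * b)⁻¹; group)
            exact Or.inr (Or.inr (Or.inr ⟨hk', h3 ▸ h2⟩))
        · exact Or.inr (Or.inr (Or.inl h))
      · rintro a (h | ⟨h, hr⟩)
        · exact Lirrefl _ h
        · have h1 : (⟨a⁻¹ * a, h⟩ : f.ker) = 1 :=
            Subtype.ext (by show a⁻¹ * a = (1 : G); group)
          rw [h1] at hr
          exact irrefl_of rk 1 hr
      · rintro a b c (h1 | ⟨h1, hr1⟩) (h2 | ⟨h2, hr2⟩)
        · exact Or.inl (Ltrans _ _ _ h1 h2)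
        · have hbc := hΦeq b c h2
          exact Or.inl (hbc ▸ h1)
        · have hab := hΦeq a b h1
          exact Or.inl (hab ▸ h2)
        · have hk : a⁻¹ * c ∈ f.ker := by
            have hac : a⁻¹ * c = (a⁻¹ * b) * (b⁻¹ * c) := by group
            rw [hac]
            exact mul_mem h1 h2
          have h3 : (⟨a⁻¹ * c, hk⟩ : f.ker) =
              (⟨a⁻¹ * b, h1⟩ : f.ker) * ⟨b⁻¹ * c, h2⟩ :=
            Subtype.ext (by show a⁻¹ * c = (a⁻¹ * b) * (b⁻¹ * c); group)
          exact Or.inr ⟨hk, h3 ▸ kposmul _ _ hr1 hr2⟩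
    · intro a b c
      have hid : (c * a)⁻¹ * (c * b) = a⁻¹ * b := by group
      simp only [hid]
      exact or_congr (hcomp c a b) Iff.rfl
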